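/- For every n ≥ 1 and every integer r ≥ 0, the number of n×n Hankel matrices over ℤ₂ whose rank over ℤ₂ is at most r is at most 2^{4r}. -/

import Mathlib

open Matrix

/-- The value of a Hankel matrix on the `m`-th antidiagonal (0 for `m` out of range). -/
noncomputable def dval (n : ℕ) (hn : 1 ≤ n) (P : Matrix (Fin n) (Fin n) (ZMod 2)) (m : ℕ) :
    ZMod 2 :=
  if h : m ≤ 2 * n - 2 then
    P ⟨min m (n - 1), by omega⟩ ⟨m - min m (n - 1), by omega⟩
  else 0

lemma dval_eq (n : ℕ) (hn : 1 ≤ n) (P : Matrix (Fin n) (Fin n) (ZMod 2))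
    (hH : ∀ j k j' k' : Fin n, (j : ℕ) + (k : ℕ) = (j' : ℕ) + (k' : ℕ) → P j k = P j' k')
    (j k : Fin n) : P j k = dval n hn P ((j : ℕ) + (k : ℕ)) := by
  have hj := j.isLt
  have hk := k.isLt
  have hm : (j : ℕ) + (k : ℕ) ≤ 2 * n - 2 := by omega
  rw [dval, dif_pos hm]
  refine hH j k _ _ ?_
  simp only [Fin.val_mk]
  omega

/-- Key rank bound: a Hankel matrix which vanishes on antidiagonals below `s` and is nonzero
on antidiagonal `s < n` has rank at least `s+1`. -/
lemma key_rank (n s : ℕ) (hs : s < n) (D : Matrix (Fin n) (Fin n) (ZMod 2))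
    (hH : ∀ j k j' k' : Fin n, (j : ℕ) + (k : ℕ) = (j' : ℕ) + (k' : ℕ) → D j k = D j' k')
    (h0 : ∀ j k : Fin n, (j : ℕ) + (k : ℕ) < s → D j k = 0)
    (j0 k0 : Fin n) (hsum : (j0 : ℕ) + (k0 : ℕ) = s) (hne : D j0 k0 ≠ 0) :
    s + 1 ≤ D.rank := by
  classical
  set fi : Fin (s + 1) → Fin n := fun i => ⟨(i : ℕ), lt_of_lt_of_le i.isLt hs⟩ with hfi
  set gl : Fin (s + 1) → Fin n := fun l => ⟨s - (l : ℕ), lt_of_le_of_lt (Nat.sub_le _ _) hs⟩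
    with hgl
  set F : Matrix (Fin (s + 1)) (Fin n) (ZMod 2) := fun i j => if fi i = j then 1 else 0 with hF
  set G : Matrix (Fin n) (Fin (s + 1)) (ZMod 2) := fun k l => if k = gl l then 1 else 0 with hG
  set M : Matrix (Fin (s + 1)) (Fin (s + 1)) (ZMod 2) := F * D * G with hMdef
  have hM : ∀ i l, M i l = D (fi i) (gl l) := by
    intro i l
    simp only [hMdef, Matrix.mul_apply]
    simp [hF, hG, ite_mul, mul_ite, Finset.sum_ite_eq,
      Finset.sum_ite_eq']
  -- M is lower triangular
  have htri : M.BlockTriangular OrderDual.toDual := by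
    intro i l h
    have hil : (i : ℕ) < (l : ℕ) := h
    have hl := l.isLt
    rw [hM]
    apply h0
    simp only [hfi, hgl]
    omega
  have hone : ∀ x : ZMod 2, x ≠ 0 → x = 1 := by decide
  have hdiag : ∀ i : Fin (s + 1), M i i = 1 := by
    intro i
    rw [hM]
    apply hone
    have : D (fi i) (gl i) = D j0 k0 := by
      apply hH
      have hi := i.isLt
      simp only [hfi, hgl]
      omega
    rw [this]
    exact hne
  have hdet : M.det = 1 := by
    rw [Matrix.det_of_lowerTriangular M htri]
    exact Finset.prod_eq_one fun i _ => hdiag i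
  have hunit : IsUnit M := by
    rw [Matrix.isUnit_iff_isUnit_det, hdet]
    exact isUnit_one
  have hMr : M.rank = s + 1 := by
    rw [Matrix.rank_of_isUnit M hunit, Fintype.card_fin]
  calc s + 1 = M.rank := hMr.symm
    _ ≤ (F * D).rank := by rw [hMdef]; exact Matrix.rank_mul_le_left _ _
    _ ≤ D.rank := Matrix.rank_mul_le_right _ _

lemma rank_sub_le_rank_add_rank {n : ℕ} (A B : Matrix (Fin n) (Fin n) (ZMod 2)) :
    (A - B).rank ≤ A.rank + B.rank := by
  rw [Matrix.rank, Matrix.rank, Matrix.rank]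
  have h1 : (A - B).mulVecLin = A.mulVecLin - B.mulVecLin := by
    ext v i
    simp [Matrix.mulVecLin, Matrix.sub_mulVec, sub_eq_add_neg]
  rw [h1]
  have h2 : LinearMap.range (A.mulVecLin - B.mulVecLin) ≤
      LinearMap.range A.mulVecLin ⊔ LinearMap.range B.mulVecLin := by
    rintro x ⟨y, rfl⟩
    refine Submodule.mem_sup.mpr ⟨A.mulVecLin y, ⟨y, rfl⟩, -(B.mulVecLin y),
      Submodule.neg_mem _ ⟨y, rfl⟩, (sub_eq_add_neg _ _).symm⟩
  exact (Submodule.finrank_mono h2).trans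
    (Submodule.finrank_add_le_finrank_add_finrank _ _)

/-- A Hankel matrix of rank at most `2r` vanishing on the first `2r` and last `2r`
antidiagonals is zero. -/
lemma hankel_eq_zero (n r : ℕ) (hn : 1 ≤ n) (D : Matrix (Fin n) (Fin n) (ZMod 2))
    (hH : ∀ j k j' k' : Fin n, (j : ℕ) + (k : ℕ) = (j' : ℕ) + (k' : ℕ) → D j k = D j' k')
    (hrank : D.rank ≤ 2 * r)
    (hfront : ∀ j k : Fin n, (j : ℕ) + (k : ℕ) < 2 * r → D j k = 0)
    (hback : ∀ j k : Fin n, 2 * n - 2 - 2 * r < (j : ℕ) + (k : ℕ) → D j k = 0) :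
    D = 0 := by
  classical
  by_contra hD
  have hex : ∃ m, ∃ j k : Fin n, (j : ℕ) + (k : ℕ) = m ∧ D j k ≠ 0 := by
    by_contra hc
    push_neg at hc
    apply hD
    ext j k
    simpa using hc ((j : ℕ) + (k : ℕ)) j k rfl
  set p : ℕ → Prop := fun m => ∃ j k : Fin n, (j : ℕ) + (k : ℕ) = m ∧ D j k ≠ 0 with hp
  set s := Nat.find hex with hsdef
  obtain ⟨js, ks, hjs, hjs0⟩ := Nat.find_spec hex
  have hjslt := js.isLt
  have hkslt := ks.isLt
  have hs2r : 2 * r ≤ s := by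
    by_contra hc
    exact hjs0 (hfront js ks (by omega))
  have hsle : s ≤ 2 * n - 2 := by omega
  set t := Nat.findGreatest p (2 * n - 2) with htdef
  have hst : s ≤ t := Nat.le_findGreatest hsle ⟨js, ks, hjs, hjs0⟩
  have hpt : p t := Nat.findGreatest_spec (P := p) hsle ⟨js, ks, hjs, hjs0⟩
  obtain ⟨jt, kt, hjt, hjt0⟩ := hpt
  have hjtlt := jt.isLt
  have hktlt := kt.isLt
  have htle : t ≤ 2 * n - 2 := Nat.findGreatest_le _
  have ht2r : t ≤ 2 * n - 2 - 2 * r := by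
    by_contra hc
    exact hjt0 (hback jt kt (by omega))
  rcases lt_or_ge s n with hsn | hsn
  · -- front case : rank ≥ s + 1 > 2r
    have h0 : ∀ j k : Fin n, (j : ℕ) + (k : ℕ) < s → D j k = 0 := by
      intro j k hjk
      by_contra hc
      exact Nat.find_min hex hjk ⟨j, k, rfl, hc⟩
    have := key_rank n s hsn D hH h0 js ks hjs hjs0
    omega
  · -- back case : reverse the matrix
    have htn : n ≤ t := le_trans hsn hst
    set rev : Fin n → Fin n := fun j =>
      ⟨n - 1 - (j : ℕ), lt_of_le_of_lt (Nat.sub_le _ _) (Nat.sub_lt hn one_pos)⟩ with hrev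
    set E : Matrix (Fin n) (Fin n) (ZMod 2) := D.submatrix rev rev with hE
    have hrevrev : ∀ j : Fin n, rev (rev j) = j := by
      intro j
      have hj := j.isLt
      simp only [hrev]
      ext
      simp
      omega
    have hES : E.rank = D.rank := by
      have : E = D.submatrix (⟨rev, rev, hrevrev, hrevrev⟩ : Equiv.Perm (Fin n))
          (⟨rev, rev, hrevrev, hrevrev⟩ : Equiv.Perm (Fin n)) := rfl
      rw [this, Matrix.rank_submatrix]
    have hEH : ∀ j k j' k' : Fin n,
        (j : ℕ) + (k : ℕ) = (j' : ℕ) + (k' : ℕ) → E j k = E j' k' := by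
      intro j k j' k' hjk
      have hj := j.isLt; have hk := k.isLt; have hj' := j'.isLt; have hk' := k'.isLt
      apply hH
      simp only [hrev]
      omega
    set s' := 2 * n - 2 - t with hs'
    have hs'n : s' < n := by omega
    have hE0 : ∀ j k : Fin n, (j : ℕ) + (k : ℕ) < s' → E j k = 0 := by
      intro j k hjk
      have hj := j.isLt; have hk := k.isLt
      by_contra hc
      have hgt : t < (rev j : ℕ) + (rev k : ℕ) := by
        simp only [hrev]
        omega
      have hle2 : (rev j : ℕ) + (rev k : ℕ) ≤ 2 * n - 2 := by
        have := (rev j).isLt; have := (rev k).isLt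
        omega
      exact Nat.findGreatest_is_greatest (P := p) hgt hle2 ⟨rev j, rev k, rfl, hc⟩
    have hEwit : E (rev jt) (rev kt) ≠ 0 := by
      simp only [hE, Matrix.submatrix_apply, hrevrev]
      exact hjt0
    have hEsum : ((rev jt : Fin n) : ℕ) + ((rev kt : Fin n) : ℕ) = s' := by
      simp only [hrev]
      omega
    have := key_rank n s' hs'n E hEH hE0 (rev jt) (rev kt) hEsum hEwit
    rw [hES] at this
    omega

/-- For every n ≥ 1 and integer r ≥ 0, the number of n×n Hankel matrices
over ℤ₂ (matrices whose (j,k) entry depends only on j+k) whose rank over ℤ₂ is at most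
r is at most 2^{4r}. -/
theorem stmt_18 (n : ℕ) (hn : 1 ≤ n) (r : ℕ) :
    Nat.card {P : Matrix (Fin n) (Fin n) (ZMod 2) //
        (∀ j k j' k' : Fin n, (j : ℕ) + (k : ℕ) = (j' : ℕ) + (k' : ℕ) → P j k = P j' k')
        ∧ P.rank ≤ r}
      ≤ 2 ^ (4 * r) := by
  classical
  set f : {P : Matrix (Fin n) (Fin n) (ZMod 2) //
      (∀ j k j' k' : Fin n, (j : ℕ) + (k : ℕ) = (j' : ℕ) + (k' : ℕ) → P j k = P j' k')
      ∧ P.rank ≤ r} → (Fin (2 * r) → ZMod 2) × (Fin (2 * r) → ZMod 2) :=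
    fun P => (fun i => dval n hn P.1 (i : ℕ), fun i => dval n hn P.1 (2 * n - 2 - (i : ℕ)))
    with hf
  have hinj : Function.Injective f := by
    intro P Q h
    have h1 := congrFun (congrArg Prod.fst h)
    have h2 := congrFun (congrArg Prod.snd h)
    simp only [hf] at h1 h2
    ext j k
    set D : Matrix (Fin n) (Fin n) (ZMod 2) := P.1 - Q.1 with hD
    have hHD : ∀ j k j' k' : Fin n,
        (j : ℕ) + (k : ℕ) = (j' : ℕ) + (k' : ℕ) → D j k = D j' k' := by
      intro j k j' k' hjk
      simp only [hD, Matrix.sub_apply, P.2.1 j k j' k' hjk, Q.2.1 j k j' k' hjk]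
    have hrankD : D.rank ≤ 2 * r := by
      rw [hD]
      have := rank_sub_le_rank_add_rank P.1 Q.1
      have hP := P.2.2
      have hQ := Q.2.2
      omega
    have hfront : ∀ j k : Fin n, (j : ℕ) + (k : ℕ) < 2 * r → D j k = 0 := by
      intro j k hjk
      have hPv := dval_eq n hn P.1 P.2.1 j k
      have hQv := dval_eq n hn Q.1 Q.2.1 j k
      have := h1 ⟨(j : ℕ) + (k : ℕ), hjk⟩
      simp only [hD, Matrix.sub_apply, hPv, hQv]
      rw [this]
      exact sub_self _
    have hback : ∀ j k : Fin n, 2 * n - 2 - 2 * r < (j : ℕ) + (k : ℕ) → D j k = 0 := by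
      intro j k hjk
      have hj := j.isLt; have hk := k.isLt
      have hm : (j : ℕ) + (k : ℕ) ≤ 2 * n - 2 := by omega
      have hi : 2 * n - 2 - ((j : ℕ) + (k : ℕ)) < 2 * r := by omega
      have := h2 ⟨2 * n - 2 - ((j : ℕ) + (k : ℕ)), hi⟩
      have harg : 2 * n - 2 - (2 * n - 2 - ((j : ℕ) + (k : ℕ))) = (j : ℕ) + (k : ℕ) := by
        omega
      rw [harg] at this
      have hPv := dval_eq n hn P.1 P.2.1 j k
      have hQv := dval_eq n hn Q.1 Q.2.1 j k
      simp only [hD, Matrix.sub_apply, hPv, hQv]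
      rw [this]
      exact sub_self _
    have hzero : D = 0 := hankel_eq_zero n r hn D hHD hrankD hfront hback
    have : P.1 j k - Q.1 j k = 0 := by
      have := congrFun (congrFun hzero j) k
      simpa [hD] using this
    linear_combination this
  calc Nat.card {P : Matrix (Fin n) (Fin n) (ZMod 2) //
        (∀ j k j' k' : Fin n, (j : ℕ) + (k : ℕ) = (j' : ℕ) + (k' : ℕ) → P j k = P j' k')
        ∧ P.rank ≤ r}
      ≤ Nat.card ((Fin (2 * r) → ZMod 2) × (Fin (2 * r) → ZMod 2)) :=
        Nat.card_le_card_of_injective f hinj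
    _ = 2 ^ (4 * r) := by
        simp only [Nat.card_eq_fintype_card, Fintype.card_prod, Fintype.card_fun,
          ZMod.card, Fintype.card_fin]
        rw [← pow_add]
        congr 1
        omega
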